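/- Every invertible isotropic function σ̂: PSym(3) → Sym(3) is semi-invertible: there exist real-valued functions ψ₀, ψ₁, ψ₂ of the matrix invariants of B such that B = ψ₀(B) I + ψ₁(B) σ̂(B) + ψ₂(B) σ̂(B)² for all B ∈ PSym(3). -/

import Mathlib

set_option maxHeartbeats 1000000

open Matrix

/-- A matrix is orthogonal. -/
def IsOrthogonal {n : ℕ} (Q : Matrix (Fin n) (Fin n) ℝ) : Prop :=
  Q * Qᵀ = 1 ∧ Qᵀ * Q = 1

/-- PSym(3): positive-definite symmetric real 3×3 matrices. -/
def PSym3 : Set (Matrix (Fin 3) (Fin 3) ℝ) := {B | B.IsSymm ∧ B.PosDef}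

/-- σ̂ is semi-invertible: B = ψ₀ I + ψ₁ σ̂(B) + ψ₂ σ̂(B)² with coefficients ψᵢ
depending only on the matrix invariants of B (i.e. invariant under
B ↦ Qᵀ B Q). -/
def SemiInvertible (σ : Matrix (Fin 3) (Fin 3) ℝ → Matrix (Fin 3) (Fin 3) ℝ) : Prop :=
  ∃ ψ : Fin 3 → (Matrix (Fin 3) (Fin 3) ℝ → ℝ),
    (∀ k : Fin 3, ∀ B ∈ PSym3, ∀ Q : Matrix (Fin 3) (Fin 3) ℝ, IsOrthogonal Q →
      ψ k (Qᵀ * B * Q) = ψ k B) ∧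
    ∀ B ∈ PSym3, B = ψ 0 B • 1 + ψ 1 B • σ B + ψ 2 B • (σ B) ^ 2

/-- Quadratic interpolation when equal nodes have equal values. -/
lemma interp3 (e b : Fin 3 → ℝ) (h : ∀ i j, e i = e j → b i = b j) :
    ∃ c : Fin 3 → ℝ, ∀ i, b i = c 0 + c 1 * e i + c 2 * (e i) ^ 2 := by
  have line : ∀ x y u v : ℝ, x ≠ y → ∃ c0 c1 : ℝ, u = c0 + c1 * x ∧ v = c0 + c1 * y := by
    intro x y u v hxy
    refine ⟨u - (u - v) / (x - y) * x, (u - v) / (x - y), by ring, ?_⟩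
    have hxy' : x - y ≠ 0 := sub_ne_zero.mpr hxy
    field_simp
    ring
  by_cases h01 : e 0 = e 1
  · by_cases h02 : e 0 = e 2
    · refine ⟨![b 0, 0, 0], ?_⟩
      intro i
      fin_cases i <;>
        simp [h 1 0 h01.symm, h 2 0 h02.symm]
    · obtain ⟨c0, c1, hc0, hc2⟩ := line (e 0) (e 2) (b 0) (b 2) h02
      refine ⟨![c0, c1, 0], ?_⟩
      intro i
      fin_cases i <;> simp [hc0, hc2, h 1 0 h01.symm, ← h01]
  · by_cases h02 : e 0 = e 2
    · obtain ⟨c0, c1, hc0, hc1⟩ := line (e 0) (e 1) (b 0) (b 1) h01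
      refine ⟨![c0, c1, 0], ?_⟩
      intro i
      fin_cases i <;> simp [hc0, hc1, h 2 0 h02.symm, ← h02]
    · by_cases h12 : e 1 = e 2
      · obtain ⟨c0, c1, hc0, hc1⟩ := line (e 0) (e 1) (b 0) (b 1) h01
        refine ⟨![c0, c1, 0], ?_⟩
        intro i
        fin_cases i <;> simp [hc0, hc1, h 2 1 h12.symm, ← h12]
      · have d01 : e 0 - e 1 ≠ 0 := sub_ne_zero.mpr h01
        have d02 : e 0 - e 2 ≠ 0 := sub_ne_zero.mpr h02
        have d12 : e 1 - e 2 ≠ 0 := sub_ne_zero.mpr h12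
        refine ⟨![b 0 * e 1 * e 2 / ((e 0 - e 1) * (e 0 - e 2))
              + b 1 * e 0 * e 2 / ((e 1 - e 0) * (e 1 - e 2))
              + b 2 * e 0 * e 1 / ((e 2 - e 0) * (e 2 - e 1)),
            -(b 0 * (e 1 + e 2) / ((e 0 - e 1) * (e 0 - e 2))
              + b 1 * (e 0 + e 2) / ((e 1 - e 0) * (e 1 - e 2))
              + b 2 * (e 0 + e 1) / ((e 2 - e 0) * (e 2 - e 1))),
            b 0 / ((e 0 - e 1) * (e 0 - e 2))
              + b 1 / ((e 1 - e 0) * (e 1 - e 2))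
              + b 2 / ((e 2 - e 0) * (e 2 - e 1))], ?_⟩
        have d10 : e 1 - e 0 ≠ 0 := sub_ne_zero.mpr (Ne.symm h01)
        have d20 : e 2 - e 0 ≠ 0 := sub_ne_zero.mpr (Ne.symm h02)
        have d21 : e 2 - e 1 ≠ 0 := sub_ne_zero.mpr (Ne.symm h12)
        intro i
        fin_cases i <;> simp <;> (field_simp; ring)

lemma isOrth_transpose {Q : Matrix (Fin 3) (Fin 3) ℝ} (hQ : IsOrthogonal Q) :
    IsOrthogonal Qᵀ := by
  refine ⟨?_, ?_⟩ <;> simp [transpose_transpose, hQ.1, hQ.2]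

lemma isOrth_mul {Q R : Matrix (Fin 3) (Fin 3) ℝ} (hQ : IsOrthogonal Q)
    (hR : IsOrthogonal R) : IsOrthogonal (Q * R) := by
  constructor
  · rw [transpose_mul, show Q * R * (Rᵀ * Qᵀ) = Q * (R * Rᵀ) * Qᵀ by simp only [mul_assoc], hR.1, mul_one, hQ.1]
  · rw [transpose_mul, show Rᵀ * Qᵀ * (Q * R) = Rᵀ * (Qᵀ * Q) * R by simp only [mul_assoc], hQ.2, mul_one, hR.2]

lemma conj_mem_PSym3 {B Q : Matrix (Fin 3) (Fin 3) ℝ} (hB : B ∈ PSym3)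
    (hQ : IsOrthogonal Q) : Qᵀ * B * Q ∈ PSym3 := by
  obtain ⟨hBs, hBp⟩ := hB
  constructor
  · show (Qᵀ * B * Q)ᵀ = _
    rw [transpose_mul, transpose_mul, transpose_transpose, hBs.eq, mul_assoc]
  · refine Matrix.PosDef.of_dotProduct_mulVec_pos ?_ ?_
    · show (Qᵀ * B * Q)ᴴ = _
      rw [conjTranspose_eq_transpose_of_trivial, transpose_mul, transpose_mul,
        transpose_transpose, hBs.eq, mul_assoc]
    · intro x hx
      have hQx : Q *ᵥ x ≠ 0 := by
        intro h
        apply hx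
        have : Qᵀ *ᵥ (Q *ᵥ x) = x := by rw [mulVec_mulVec, hQ.2, one_mulVec]
        rw [h, mulVec_zero] at this
        exact this.symm
      have := hBp.dotProduct_mulVec_pos hQx
      have key : star x ⬝ᵥ (Qᵀ * B * Q) *ᵥ x = star (Q *ᵥ x) ⬝ᵥ B *ᵥ (Q *ᵥ x) := by
        rw [← mulVec_mulVec, ← mulVec_mulVec, dotProduct_mulVec, vecMul_transpose]
        simp [star, mulVec_mulVec]
      rw [key]
      exact this

lemma conj_sq {M Q : Matrix (Fin 3) (Fin 3) ℝ} (hQ : IsOrthogonal Q) :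
    (Qᵀ * M * Q) ^ 2 = Qᵀ * M ^ 2 * Q := by
  rw [pow_two, pow_two, show Qᵀ * M * Q * (Qᵀ * M * Q) = Qᵀ * M * (Q * Qᵀ) * M * Q by simp only [mul_assoc],
    hQ.1, mul_one]
  simp only [mul_assoc]


/-- off-diagonal entries of σ of a diagonal PSym3 matrix vanish -/
lemma sigma_diag_offdiag
    (σ : Matrix (Fin 3) (Fin 3) ℝ → Matrix (Fin 3) (Fin 3) ℝ)
    (hσiso : ∀ B ∈ PSym3, ∀ Q : Matrix (Fin 3) (Fin 3) ℝ, IsOrthogonal Q →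
      σ (Qᵀ * B * Q) = Qᵀ * σ B * Q)
    {b : Fin 3 → ℝ} (hD : diagonal b ∈ PSym3) {i j : Fin 3} (hij : i ≠ j) :
    σ (diagonal b) i j = 0 := by
  set d : Fin 3 → ℝ := fun k => if k = i then -1 else 1 with hd
  have hdd : ∀ k, d k * d k = 1 := by
    intro k; by_cases h : k = i <;> simp [hd, h]
  have hSorth : IsOrthogonal (diagonal d) := by
    have hSS : diagonal d * diagonal d = 1 := by
      rw [diagonal_mul_diagonal]
      have hfun : (fun k => d k * d k) = fun _ => (1:ℝ) := funext hdd
      rw [hfun, diagonal_one]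
    exact ⟨by rwa [diagonal_transpose], by rwa [diagonal_transpose]⟩
  have hconj : (diagonal d)ᵀ * diagonal b * diagonal d = diagonal b := by
    rw [diagonal_transpose, diagonal_mul_diagonal, diagonal_mul_diagonal]
    refine congrArg diagonal (funext fun k => ?_)
    by_cases h : k = i <;> simp [hd, h]
  have := hσiso (diagonal b) hD (diagonal d) hSorth
  rw [hconj] at this
  have hent := congrFun (congrFun this i) j
  rw [diagonal_transpose] at hent
  have h1 : (diagonal d * σ (diagonal b) * diagonal d) i j
      = d i * σ (diagonal b) i j * d j := by
    rw [mul_diagonal, diagonal_mul]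
  rw [h1] at hent
  have hdi : d i = -1 := by simp [hd]
  have hdj : d j = 1 := by simp [hd, (Ne.symm hij)]
  rw [hdi, hdj] at hent
  linarith

lemma key_coeffs
    (σ : Matrix (Fin 3) (Fin 3) ℝ → Matrix (Fin 3) (Fin 3) ℝ)
    (hσiso : ∀ B ∈ PSym3, ∀ Q : Matrix (Fin 3) (Fin 3) ℝ, IsOrthogonal Q →
      σ (Qᵀ * B * Q) = Qᵀ * σ B * Q)
    (hinj : ∀ B₁ ∈ PSym3, ∀ B₂ ∈ PSym3, σ B₁ = σ B₂ → B₁ = B₂)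
    {B : Matrix (Fin 3) (Fin 3) ℝ} (hB : B ∈ PSym3) :
    ∃ c : Fin 3 → ℝ, B = c 0 • 1 + c 1 • σ B + c 2 • (σ B) ^ 2 := by
  obtain ⟨hBs, hBp⟩ := hB
  have hH : B.IsHermitian := hBp.1
  set Q : Matrix (Fin 3) (Fin 3) ℝ := (hH.eigenvectorUnitary : Matrix (Fin 3) (Fin 3) ℝ) with hQdef
  have hQorth : IsOrthogonal Q := by
    have h1 := (Matrix.mem_unitaryGroup_iff).mp hH.eigenvectorUnitary.2
    have h2 := (Matrix.mem_unitaryGroup_iff').mp hH.eigenvectorUnitary.2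
    have hst : star Q = Qᵀ := by
      rw [Matrix.star_eq_conjTranspose, conjTranspose_eq_transpose_of_trivial]
    constructor
    · rw [← hst]; exact h1
    · rw [← hst]; exact h2
  set b : Fin 3 → ℝ := hH.eigenvalues with hb
  have hspec : B = Q * diagonal b * Qᵀ := by
    have := hH.spectral_theorem
    rw [Unitary.conjStarAlgAut_apply, Matrix.star_eq_conjTranspose, conjTranspose_eq_transpose_of_trivial] at this
    simpa using this
  have hD : Qᵀ * B * Q = diagonal b := by
    rw [hspec]
    calc Qᵀ * (Q * diagonal b * Qᵀ) * Q = (Qᵀ * Q) * diagonal b * (Qᵀ * Q) := by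
          simp only [mul_assoc]
      _ = diagonal b := by rw [hQorth.2, one_mul, mul_one]
  have hDmem : diagonal b ∈ PSym3 := hD ▸ conj_mem_PSym3 ⟨hBs, hBp⟩ hQorth
  -- σ of diagonal is diagonal
  set e : Fin 3 → ℝ := fun i => σ (diagonal b) i i with he
  have hE : σ (diagonal b) = diagonal e := by
    ext i j
    by_cases h : i = j
    · subst h; rw [diagonal_apply_eq]
    · rw [diagonal_apply_ne _ h]
      exact sigma_diag_offdiag σ hσiso hDmem h
  -- equal e-values force equal b-values
  have hsep : ∀ i j, e i = e j → b i = b j := by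
    intro i j hij
    by_cases h : i = j
    · rw [h]
    · set s := Equiv.swap i j with hs
      set P : Matrix (Fin 3) (Fin 3) ℝ := s.toPEquiv.toMatrix with hP
      have hPt : Pᵀ = s.toPEquiv.toMatrix := by
        rw [hP, ← PEquiv.toMatrix_symm, ← Equiv.toPEquiv_symm, Equiv.symm_swap]
      have hPorth : IsOrthogonal P := by
        have : P * P = 1 := by
          rw [hP, ← PEquiv.toMatrix_trans, ← Equiv.toPEquiv_trans]
          have : s.trans s = Equiv.refl _ := by rw [hs]; exact Equiv.swap_swap i j
          rw [this, Equiv.toPEquiv_refl, PEquiv.toMatrix_refl]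
        exact ⟨by rwa [hPt], by rwa [hPt]⟩
      have hconjD : ∀ v : Fin 3 → ℝ, Pᵀ * diagonal v * P = diagonal (v ∘ s) := by
        intro v
        rw [hPt, hP, PEquiv.toMatrix_toPEquiv_mul, PEquiv.mul_toMatrix_toPEquiv,
          Equiv.symm_swap, submatrix_submatrix]
        rw [← hs]; exact submatrix_diagonal_equiv v s
      have hDs : Pᵀ * diagonal b * P ∈ PSym3 := conj_mem_PSym3 hDmem hPorth
      have hEs : e ∘ s = e := by
        funext k
        show e (s k) = e k
        by_cases hk : k = i
        · have hsk : s k = j := by rw [hk, hs]; exact Equiv.swap_apply_left i j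
          rw [hsk, hk]; exact hij.symm
        · by_cases hk' : k = j
          · have hsk : s k = i := by rw [hk', hs]; exact Equiv.swap_apply_right i j
            rw [hsk, hk']; exact hij
          · rw [hs, Equiv.swap_apply_of_ne_of_ne hk hk']
      have hkey : σ (Pᵀ * diagonal b * P) = σ (diagonal b) := by
        rw [hσiso (diagonal b) hDmem P hPorth, hE, hconjD e, hEs]
      have := hinj _ hDs _ hDmem hkey
      rw [hconjD b] at this
      have hbb := congrFun (congrFun this i) i
      simp only [diagonal_apply_eq] at hbb
      have : (b ∘ s) i = b j := by simp [hs, Equiv.swap_apply_left]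
      rw [this] at hbb
      exact hbb.symm
  obtain ⟨c, hc⟩ := interp3 e b hsep
  refine ⟨c, ?_⟩
  have hdiagb : diagonal b
      = c 0 • (1 : Matrix (Fin 3) (Fin 3) ℝ) + c 1 • diagonal e + c 2 • diagonal e ^ 2 := by
    ext k l
    by_cases h : k = l
    · subst h
      simp only [Matrix.add_apply, Matrix.smul_apply, Matrix.one_apply_eq, pow_two,
        diagonal_mul_diagonal, diagonal_apply_eq, smul_eq_mul]
      rw [hc k]; ring
    · simp [pow_two, diagonal_mul_diagonal, diagonal_apply_ne _ h, Matrix.one_apply_ne h]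
  have hQE : Q * diagonal e * Qᵀ = σ B := by
    have h1 : Qᵀ * σ B * Q = diagonal e := by
      rw [← hσiso B ⟨hBs, hBp⟩ Q hQorth, hD, hE]
    calc Q * diagonal e * Qᵀ = Q * (Qᵀ * σ B * Q) * Qᵀ := by rw [h1]
      _ = (Q * Qᵀ) * σ B * (Q * Qᵀ) := by simp only [mul_assoc]
      _ = σ B := by rw [hQorth.1, one_mul, mul_one]
  have hQE2 : Q * diagonal e ^ 2 * Qᵀ = (σ B) ^ 2 := by
    have h2 := conj_sq (M := diagonal e) (isOrth_transpose hQorth)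
    rw [transpose_transpose] at h2
    rw [← h2, hQE]
  calc B = Q * diagonal b * Qᵀ := hspec
    _ = Q * (c 0 • 1 + c 1 • diagonal e + c 2 • diagonal e ^ 2) * Qᵀ := by rw [← hdiagb]
    _ = c 0 • (Q * 1 * Qᵀ) + c 1 • (Q * diagonal e * Qᵀ) + c 2 • (Q * diagonal e ^ 2 * Qᵀ) := by
        rw [Matrix.mul_add, Matrix.mul_add, Matrix.add_mul, Matrix.add_mul, Matrix.mul_smul,
          Matrix.mul_smul, Matrix.mul_smul, Matrix.smul_mul, Matrix.smul_mul, Matrix.smul_mul]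
    _ = c 0 • 1 + c 1 • σ B + c 2 • σ B ^ 2 := by rw [mul_one, hQorth.1, hQE, hQE2]

/-- Every invertible isotropic function σ̂ : PSym(3) → Sym(3)
is semi-invertible. -/
theorem invertible_isotropic_implies_semiInvertible
    (σ : Matrix (Fin 3) (Fin 3) ℝ → Matrix (Fin 3) (Fin 3) ℝ)
    (hσsym : ∀ B ∈ PSym3, (σ B).IsSymm)
    (hσiso : ∀ B ∈ PSym3, ∀ Q : Matrix (Fin 3) (Fin 3) ℝ, IsOrthogonal Q →
      σ (Qᵀ * B * Q) = Qᵀ * σ B * Q)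
    (hinj : ∀ B₁ ∈ PSym3, ∀ B₂ ∈ PSym3, σ B₁ = σ B₂ → B₁ = B₂)
    (hsurj : ∀ Y : Matrix (Fin 3) (Fin 3) ℝ, Y.IsSymm → ∃ B ∈ PSym3, σ B = Y) :
    SemiInvertible σ := by
  classical
  set r : Matrix (Fin 3) (Fin 3) ℝ → Matrix (Fin 3) (Fin 3) ℝ → Prop :=
    fun A C => ∃ Q, IsOrthogonal Q ∧ C = Qᵀ * A * Q with hr
  have hrefl : ∀ A, r A A := by
    intro A
    exact ⟨1, ⟨by simp, by simp⟩, by simp⟩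
  have hsymm : ∀ {A C}, r A C → r C A := by
    rintro A C ⟨Q, hQ, rfl⟩
    refine ⟨Qᵀ, isOrth_transpose hQ, ?_⟩
    rw [transpose_transpose]
    calc A = (Q * Qᵀ) * A * (Q * Qᵀ) := by rw [hQ.1, one_mul, mul_one]
      _ = Q * (Qᵀ * A * Q) * Qᵀ := by simp only [mul_assoc]
  have htrans : ∀ {A C E}, r A C → r C E → r A E := by
    rintro A C E ⟨Q, hQ, rfl⟩ ⟨R, hR, rfl⟩
    refine ⟨Q * R, isOrth_mul hQ hR, ?_⟩
    rw [transpose_mul]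
    simp only [mul_assoc]
  let S : Setoid (Matrix (Fin 3) (Fin 3) ℝ) := ⟨r, ⟨hrefl, hsymm, htrans⟩⟩
  have key' : ∀ A : Matrix (Fin 3) (Fin 3) ℝ, ∃ c : Fin 3 → ℝ,
      A ∈ PSym3 → A = c 0 • 1 + c 1 • σ A + c 2 • (σ A) ^ 2 := by
    intro A
    by_cases h : A ∈ PSym3
    · obtain ⟨c, hc⟩ := key_coeffs σ hσiso hinj h
      exact ⟨c, fun _ => hc⟩
    · exact ⟨0, fun h' => absurd h' h⟩
  refine ⟨fun k B => Classical.choose (key' (Quotient.mk S B).out) k, ?_, ?_⟩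
  · intro k B hB Q hQ
    have hmk : Quotient.mk S (Qᵀ * B * Q) = Quotient.mk S B :=
      Quotient.sound (hsymm ⟨Q, hQ, rfl⟩)
    exact congrArg (fun q : Quotient S => Classical.choose (key' (Quotient.out q)) k) hmk
  · intro B hB
    have h1 : Quotient.mk S (Quotient.mk S B).out = Quotient.mk S B := Quotient.out_eq _
    obtain ⟨Q, hQ, hBeq⟩ : r (Quotient.mk S B).out B := Quotient.exact h1
    set R := (Quotient.mk S B).out with hRdef
    have hRmem : R ∈ PSym3 := by
      have h2 : R = Qᵀᵀ * B * Qᵀ := by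
        rw [transpose_transpose, hBeq]
        calc R = (Q * Qᵀ) * R * (Q * Qᵀ) := by rw [hQ.1, one_mul, mul_one]
          _ = Q * (Qᵀ * R * Q) * Qᵀ := by simp only [mul_assoc]
      rw [h2]
      exact conj_mem_PSym3 hB (isOrth_transpose hQ)
    set c := Classical.choose (key' R) with hcdef
    have hcspec : R = c 0 • 1 + c 1 • σ R + c 2 • (σ R) ^ 2 :=
      Classical.choose_spec (key' R) hRmem
    have hσB : σ B = Qᵀ * σ R * Q := by
      rw [hBeq]
      exact hσiso R hRmem Q hQ
    have hσB2 : (σ B) ^ 2 = Qᵀ * (σ R) ^ 2 * Q := by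
      rw [hσB]
      exact conj_sq hQ
    calc B = Qᵀ * R * Q := hBeq
      _ = Qᵀ * (c 0 • 1 + c 1 • σ R + c 2 • (σ R) ^ 2) * Q := by rw [← hcspec]
      _ = c 0 • (Qᵀ * 1 * Q) + c 1 • (Qᵀ * σ R * Q) + c 2 • (Qᵀ * (σ R) ^ 2 * Q) := by
          rw [Matrix.mul_add, Matrix.mul_add, Matrix.add_mul, Matrix.add_mul, Matrix.mul_smul,
            Matrix.mul_smul, Matrix.mul_smul, Matrix.smul_mul, Matrix.smul_mul, Matrix.smul_mul]
      _ = c 0 • 1 + c 1 • σ B + c 2 • (σ B) ^ 2 := by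
          rw [mul_one, hQ.2, ← hσB, ← hσB2]
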